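/- For odd d > 0, every M ∈ GL₂(ℤ) with MᵀQ_dM = Q_d, where Q_d = [[2,d],[d,-2]], has the form R±_{(a,b)} = [[((2+d²)b ∓ da)/2, (-db ± a)/2],[(-db ± a)/2, b]] or S±_{(a,b)} = [[-b, (-db ± a)/2],[(-db ∓ a)/2, b]] for some integer solution (a,b) of a² - (d²+4)b² = -4. -/

import Mathlib

open Matrix

/-- For odd d > 0, every M ∈ GL₂(ℤ) with MᵀQ_dM = Q_d, Q_d = [[2,d],[d,-2]], has the
form R±_{(a,b)} or S±_{(a,b)} for an integer solution (a,b) of a² - (d²+4)b² = -4.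
(Equalities are stated after clearing the denominator 2.) -/
theorem stmt_10 (d : ℤ) (hd : Odd d) (hpos : 0 < d) :
    ∀ M : Matrix (Fin 2) (Fin 2) ℤ, IsUnit M.det →
      Mᵀ * !![2, d; d, -2] * M = !![2, d; d, -2] →
      ∃ a b : ℤ, a^2 - (d^2 + 4)*b^2 = -4 ∧
        ((2:ℤ) • M = !![(2 + d^2)*b - d*a, -d*b + a; -d*b + a, 2*b] ∨
         (2:ℤ) • M = !![(2 + d^2)*b + d*a, -d*b - a; -d*b - a, 2*b] ∨
         (2:ℤ) • M = !![-2*b, -d*b + a; -d*b - a, 2*b] ∨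
         (2:ℤ) • M = !![-2*b, -d*b - a; -d*b + a, 2*b]) := by
  intro M hu h
  set p := M 0 0 with hp
  set q := M 0 1 with hq
  set r := M 1 0 with hr
  set s := M 1 1 with hs
  -- E2 from entry (1,1) of h
  have e2 := congrFun (congrFun h 1) 1
  simp [Matrix.mul_apply, Fin.sum_univ_two, Matrix.transpose_apply] at e2
  rw [← hq, ← hs] at e2
  -- key linear relation
  have key : M.det • (!![(2:ℤ), d; d, -2] * M) = (Mᵀ).adjugate * !![(2:ℤ), d; d, -2] := by
    have h2 := congrArg (fun X => (Mᵀ).adjugate * X) h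
    simp only [← Matrix.mul_assoc] at h2
    rw [Matrix.adjugate_mul, Matrix.det_transpose, Matrix.smul_mul, Matrix.smul_mul,
      Matrix.one_mul] at h2
    exact h2
  have hdet := M.det_fin_two
  rcases Int.isUnit_iff.mp hu with he | he <;> rw [he] at key
  · -- det = 1
    have k01 := congrFun (congrFun key 0) 1
    have k10 := congrFun (congrFun key 1) 0
    have k00 := congrFun (congrFun key 0) 0
    simp [Matrix.mul_apply, Matrix.vecMul, dotProduct, Fin.sum_univ_two, Matrix.adjugate_fin_two,
      Matrix.transpose_apply] at k01 k10 k00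
    simp only [← hp, ← hq, ← hr, ← hs] at k01 k10 k00
    have hqr : q = r := by nlinarith [sq_nonneg d, k01, k10]
    have hps : 2*p = 2*s - 2*d*q := by linear_combination k00 + 2*d*hqr
    refine ⟨2*q + d*s, s, by nlinarith [e2], Or.inl ?_⟩
    ext i j
    fin_cases i <;> fin_cases j <;>
      simp [Matrix.smul_apply, ← hp, ← hq, ← hr, ← hs] <;> linarith
  · -- det = -1
    have k01 := congrFun (congrFun key 0) 1
    have k00 := congrFun (congrFun key 0) 0
    have k11 := congrFun (congrFun key 1) 1
    simp [Matrix.mul_apply, Matrix.vecMul, dotProduct, Fin.sum_univ_two, Matrix.adjugate_fin_two,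
      Matrix.transpose_apply] at k01 k00 k11
    simp only [← hp, ← hq, ← hr, ← hs] at k01 k00 k11
    have hps : p = -s := by linarith [k00]
    have hrq : r = -q - d*s := by linarith [k01]
    refine ⟨2*q + d*s, s, by nlinarith [e2], Or.inr (Or.inr (Or.inl ?_))⟩
    ext i j
    fin_cases i <;> fin_cases j <;>
      simp [Matrix.smul_apply, ← hp, ← hq, ← hr, ← hs] <;> ring_nf <;> linarith
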